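/- If c = v − u is a unit of R, then e₁ := c⁻¹·a and e₂ := −c⁻¹·b are orthogonal idempotents of A = A_{h,t} with e₁·e₂ = 0 and e₁ + e₂ = 1, and the R-algebra homomorphism A → R × R induced by the two evaluations X ↦ u and X ↦ v is an isomorphism of R-algebras. -/

import Mathlib

open Polynomial

/-- The Frobenius algebra `A_{h,t} = R[X]/(X² − h·X − t)`. -/
noncomputable abbrev Aht (R : Type*) [CommRing R] (h t : R) : Type _ :=
  AdjoinRoot ((X : R[X]) ^ 2 - C h * X - C t)

/-- The image of the variable `X` in `A_{h,t}`. -/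
noncomputable def Xht (R : Type*) [CommRing R] (h t : R) : Aht R h t :=
  AdjoinRoot.root _

/-- If `c = v − u` is a unit of `R` (with inverse `cinv`), then
`e₁ = c⁻¹·a` and `e₂ = −c⁻¹·b` are orthogonal idempotents of `A = A_{h,t}` with
`e₁·e₂ = 0` and `e₁ + e₂ = 1`, and the `R`-algebra homomorphism `A → R × R`
induced by the two evaluations `X ↦ u` and `X ↦ v` is an isomorphism. -/
theorem stmt6 {R : Type*} [CommRing R] (h t u v c cinv : R)
    (huv : u + v = h) (hmul : u * v = -t) (hc : c = v - u) (hcu : c * cinv = 1)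
    (a b e₁ e₂ : Aht R h t)
    (ha : a = Xht R h t - algebraMap R (Aht R h t) u)
    (hb : b = Xht R h t - algebraMap R (Aht R h t) v)
    (he₁ : e₁ = cinv • a) (he₂ : e₂ = -(cinv • b)) :
    e₁ * e₁ = e₁ ∧ e₂ * e₂ = e₂ ∧ e₁ * e₂ = 0 ∧ e₁ + e₂ = 1 ∧
      ∃ φ : Aht R h t →ₐ[R] R × R, φ (Xht R h t) = (u, v) ∧ Function.Bijective φ := by
  have hrel : Xht R h t ^ 2 - algebraMap R (Aht R h t) h * Xht R h t
      - algebraMap R (Aht R h t) t = 0 := by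
    have := AdjoinRoot.mk_self (f := (X : R[X]) ^ 2 - C h * X - C t)
    simpa [Xht, AdjoinRoot.algebraMap_eq, map_sub, map_pow, map_mul] using this
  have h1 : algebraMap R (Aht R h t) u + algebraMap R (Aht R h t) v
      = algebraMap R (Aht R h t) h := by rw [← map_add, huv]
  have h2 : algebraMap R (Aht R h t) u * algebraMap R (Aht R h t) v
      = - algebraMap R (Aht R h t) t := by rw [← map_mul, hmul, map_neg]
  have hab : a * b = 0 := by
    rw [ha, hb]
    linear_combination hrel - Xht R h t * h1 + h2
  have hprod : e₁ * e₂ = 0 := by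
    rw [he₁, he₂, mul_neg, smul_mul_smul_comm, hab, smul_zero, neg_zero]
  have hsum : e₁ + e₂ = 1 := by
    rw [he₁, he₂, ← sub_eq_add_neg, ← smul_sub, ha, hb]
    have heq : Xht R h t - algebraMap R (Aht R h t) u
        - (Xht R h t - algebraMap R (Aht R h t) v) = algebraMap R (Aht R h t) c := by
      rw [hc, map_sub]; ring
    rw [heq, Algebra.smul_def, ← map_mul, mul_comm cinv c, hcu, map_one]
  have he1sq : e₁ * e₁ = e₁ := by
    calc e₁ * e₁ = e₁ * (e₁ + e₂) - e₁ * e₂ := by ring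
    _ = e₁ := by rw [hsum, hprod]; ring
  have he2sq : e₂ * e₂ = e₂ := by
    calc e₂ * e₂ = e₂ * (e₁ + e₂) - e₁ * e₂ := by ring
    _ = e₂ := by rw [hsum, hprod]; ring
  refine ⟨he1sq, he2sq, hprod, hsum, ?_⟩
  have hf : aeval ((u, v) : R × R) ((X : R[X]) ^ 2 - C h * X - C t) = 0 := by
    have h4 : algebraMap R (R × R) h = (h, h) := rfl
    have h5 : algebraMap R (R × R) t = (t, t) := rfl
    simp only [map_sub, map_pow, map_mul, aeval_X, aeval_C, h4, h5, pow_two,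
      Prod.mk_mul_mk, Prod.mk_sub_mk]
    rw [Prod.ext_iff]
    constructor
    · show u * u - h * u - t = 0
      linear_combination u * huv - hmul
    · show v * v - h * v - t = 0
      linear_combination v * huv - hmul
  set φ := AdjoinRoot.liftAlgHom ((X : R[X]) ^ 2 - C h * X - C t) (Algebra.ofId R (R × R)) ((u, v) : R × R) hf with hφdef
  have hφx : φ (Xht R h t) = (u, v) := by
    show AdjoinRoot.liftAlgHom ((X : R[X]) ^ 2 - C h * X - C t) (Algebra.ofId R (R × R)) ((u, v) : R × R) hf
        (AdjoinRoot.root ((X : R[X]) ^ 2 - C h * X - C t)) = ((u, v) : R × R)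
    exact AdjoinRoot.liftAlgHom_root _ _ _ hf
  have halg : ∀ r : R, algebraMap R (R × R) r = (r, r) := fun r => rfl
  have hφa : φ a = (0, c) := by
    rw [ha, map_sub, hφx, AlgHom.commutes, halg, hc, Prod.mk_sub_mk, sub_self]
  have hφb : φ b = (-c, 0) := by
    rw [hb, map_sub, hφx, AlgHom.commutes, halg, hc, Prod.mk_sub_mk, sub_self, neg_sub]
  have hφe₁ : φ e₁ = (0, 1) := by
    rw [he₁, map_smul, hφa, Prod.smul_mk, smul_zero, smul_eq_mul, mul_comm, hcu]
  have hφe₂ : φ e₂ = (1, 0) := by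
    rw [he₂, map_neg, map_smul, hφb, Prod.smul_mk, smul_zero, smul_eq_mul,
      Prod.neg_mk, neg_zero, mul_neg, neg_neg, mul_comm cinv c, hcu]
  have hkey : algebraMap R (Aht R h t) cinv *
      (algebraMap R (Aht R h t) v - algebraMap R (Aht R h t) u) = 1 := by
    rw [← map_sub, ← map_mul, ← hc, mul_comm cinv c, hcu, map_one]
  have hxrec : v • e₁ + u • e₂ = Xht R h t := by
    rw [he₁, he₂, ha, hb]
    simp only [smul_neg, Algebra.smul_def, map_mul]
    linear_combination Xht R h t * hkey
  let ψ : R × R →ₐ[R] Aht R h t :=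
  { toFun := fun p => p.2 • e₁ + p.1 • e₂
    map_one' := by simpa using hsum
    map_zero' := by simp
    map_add' := fun p q => by
      simp only [Prod.fst_add, Prod.snd_add, add_smul]; ring
    map_mul' := fun p q => by
      simp only [Prod.fst_mul, Prod.snd_mul, Algebra.smul_def, map_mul]
      linear_combination (-(algebraMap R (Aht R h t) p.2 * algebraMap R (Aht R h t) q.2)) * he1sq
        - (algebraMap R (Aht R h t) p.1 * algebraMap R (Aht R h t) q.1) * he2sq
        - (algebraMap R (Aht R h t) p.2 * algebraMap R (Aht R h t) q.1
            + algebraMap R (Aht R h t) p.1 * algebraMap R (Aht R h t) q.2) * hprod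
    commutes' := fun r => by
      show r • e₁ + r • e₂ = algebraMap R (Aht R h t) r
      rw [← smul_add, hsum, Algebra.smul_def, mul_one] }
  have hψ : ∀ p : R × R, ψ p = p.2 • e₁ + p.1 • e₂ := fun p => rfl
  have hleft : ∀ z : Aht R h t, ψ (φ z) = z := by
    have hcomp : ψ.comp φ = AlgHom.id R (Aht R h t) := by
      refine AdjoinRoot.algHom_ext ?_
      show ψ (φ (AdjoinRoot.root _)) = AdjoinRoot.root _
      rw [show AdjoinRoot.root ((X : R[X]) ^ 2 - C h * X - C t) = Xht R h t from rfl,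
        hφx, hψ]
      simpa using hxrec
    intro z
    exact DFunLike.congr_fun hcomp z
  have hright : ∀ p : R × R, φ (ψ p) = p := by
    intro p
    rw [hψ, map_add, map_smul, map_smul, hφe₁, hφe₂, Prod.smul_mk, Prod.smul_mk]
    simp
  exact ⟨φ, hφx, Function.bijective_iff_has_inverse.mpr ⟨ψ, hleft, hright⟩⟩
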